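/- Under the two-stage randomized design, for every z ∈ {0,1} and mechanism a with J_a ≥ 2, the between-cluster sample variance satisfies E[σ̂_b²(z,a)] = σ_b²(z,a) + (1/J) Σ_{j=1}^J (1/n_{jz}(a)) (1 − n_{jz}(a)/n_j) σ_j²(z,a). -/

import Mathlib

/-!
Two-stage randomized experiments (Jiang & Imai).
STATEMENT 0: Unbiasedness of Ŷ(z,a): E[Ŷ(z,a)] = Ȳ(z,a).
-/

open scoped BigOperators

noncomputable section

/-- A two-stage randomized design: `J` clusters, the `j`-th of size `n j`,
`m` treatment assignment mechanisms, `Jc a` clusters assigned to mechanism `a`,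
`n1 j a` treated units in cluster `j` under mechanism `a`, and fixed potential
outcomes `Y j i z a` (with `z : Bool`, `true` = treatment). -/
structure TwoStageDesign where
  J : ℕ
  m : ℕ
  n : Fin J → ℕ
  Jc : Fin m → ℕ
  n1 : Fin J → Fin m → ℕ
  Y : (j : Fin J) → Fin (n j) → Bool → Fin m → ℝ

namespace TwoStageDesign

variable (d : TwoStageDesign)

/-- The number of units in cluster `j` assigned to condition `z` under mechanism `a`. -/
def nz (z : Bool) (j : Fin d.J) (a : Fin d.m) : ℕ :=
  if z then d.n1 j a else d.n j - d.n1 j a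

/-- Admissible first-stage assignments: mechanism `a` is given to exactly `Jc a` clusters. -/
def mechA : Finset (Fin d.J → Fin d.m) :=
  Finset.univ.filter fun A => ∀ a, (Finset.univ.filter fun j => A j = a).card = d.Jc a

/-- Admissible second-stage assignments given the first stage `A`: the treated set in
cluster `j` has exactly `n1 j (A j)` units. -/
def treatA (A : Fin d.J → Fin d.m) : Finset ((j : Fin d.J) → Finset (Fin (d.n j))) :=
  Finset.univ.filter fun S => ∀ j, (S j).card = d.n1 j (A j)

/-- Expectation with respect to the two-stage randomization: `A` is uniform on the
admissible first-stage assignments and, given `A`, the treated sets are uniform on the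
admissible second-stage assignments (independently across clusters). -/
def expec (f : (Fin d.J → Fin d.m) → ((j : Fin d.J) → Finset (Fin (d.n j))) → ℝ) : ℝ :=
  ∑ A ∈ d.mechA, ∑ S ∈ d.treatA A,
    f A S / ((d.mechA.card : ℝ) * ((d.treatA A).card : ℝ))

/-- Covariance under the two-stage randomization. -/
def cov (f g : (Fin d.J → Fin d.m) → ((j : Fin d.J) → Finset (Fin (d.n j))) → ℝ) : ℝ :=
  d.expec fun A S => (f A S - d.expec f) * (g A S - d.expec g)

/-- Variance under the two-stage randomization. -/
def var (f : (Fin d.J → Fin d.m) → ((j : Fin d.J) → Finset (Fin (d.n j))) → ℝ) : ℝ :=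
  d.cov f f

/-- Observed outcome of unit `i` in cluster `j`: `Y_{ij} = Y_{ij}(Z_{ij}, A_j)`. -/
def Yobs (A : Fin d.J → Fin d.m) (S : (j : Fin d.J) → Finset (Fin (d.n j)))
    (j : Fin d.J) (i : Fin (d.n j)) : ℝ :=
  d.Y j i (decide (i ∈ S j)) (A j)

/-- `Ŷ_j(z)`: average observed outcome among units of cluster `j` with `Z_{ij} = z`. -/
def hatYj (A : Fin d.J → Fin d.m) (S : (j : Fin d.J) → Finset (Fin (d.n j)))
    (z : Bool) (j : Fin d.J) : ℝ :=
  (∑ i ∈ Finset.univ.filter (fun i => decide (i ∈ S j) = z), d.Yobs A S j i) /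
    ((Finset.univ.filter (fun i : Fin (d.n j) => decide (i ∈ S j) = z)).card : ℝ)

/-- `Ŷ(z,a)`: average of `Ŷ_j(z)` over clusters with `A_j = a`. -/
def hatY (A : Fin d.J → Fin d.m) (S : (j : Fin d.J) → Finset (Fin (d.n j)))
    (z : Bool) (a : Fin d.m) : ℝ :=
  (∑ j ∈ Finset.univ.filter (fun j => A j = a), d.hatYj A S z j) / (d.Jc a : ℝ)

/-- `Ȳ_j(z,a)`: cluster-level average potential outcome. -/
def Ybarj (j : Fin d.J) (z : Bool) (a : Fin d.m) : ℝ :=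
  (∑ i, d.Y j i z a) / (d.n j : ℝ)

/-- `Ȳ(z,a)`: population-level average potential outcome. -/
def Ybar (z : Bool) (a : Fin d.m) : ℝ :=
  (∑ j, d.Ybarj j z a) / (d.J : ℝ)

/-- `σ_j²(z,z';a,a')`: within-cluster covariance of the potential outcomes. -/
def sigU (j : Fin d.J) (z z' : Bool) (a a' : Fin d.m) : ℝ :=
  (∑ i, (d.Y j i z a - d.Ybarj j z a) * (d.Y j i z' a' - d.Ybarj j z' a')) /
    ((d.n j : ℝ) - 1)

/-- `σ_b²(z,z';a,a')`: between-cluster covariance of the cluster averages. -/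
def sigB (z z' : Bool) (a a' : Fin d.m) : ℝ :=
  (∑ j, (d.Ybarj j z a - d.Ybar z a) * (d.Ybarj j z' a' - d.Ybar z' a')) /
    ((d.J : ℝ) - 1)

/-- `σ̂_b²(z,z';a)`: between-cluster sample covariance among clusters with `A_j = a`. -/
def sigBhat (A : Fin d.J → Fin d.m) (S : (j : Fin d.J) → Finset (Fin (d.n j)))
    (z z' : Bool) (a : Fin d.m) : ℝ :=
  (∑ j ∈ Finset.univ.filter (fun j => A j = a),
      (d.hatYj A S z j - d.hatY A S z a) * (d.hatYj A S z' j - d.hatY A S z' a)) /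
    ((d.Jc a : ℝ) - 1)

end TwoStageDesign


open Finset

variable {α : Type*} [Fintype α] [DecidableEq α]

lemma card_powersetCard_mem (i : α) (k : ℕ) :
    ((powersetCard (k+1) (univ : Finset α)).filter (fun t => i ∈ t)).card
      = (Fintype.card α - 1).choose k := by
  have h1 : Fintype.card α - 1 = (univ.erase i).card := by
    rw [card_erase_of_mem (mem_univ i), card_univ]
  rw [h1, ← Finset.card_powersetCard k (univ.erase i)]
  refine Finset.card_bij' (fun t _ => t.erase i) (fun u _ => insert i u) ?_ ?_ ?_ ?_
  · intro t ht
    simp only [mem_filter, mem_powersetCard_univ] at ht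
    simp only [mem_powersetCard]
    refine ⟨fun x hx => ?_, ?_⟩
    · simp only [mem_erase] at hx ⊢
      exact ⟨hx.1, mem_univ x⟩
    · rw [card_erase_of_mem ht.2, ht.1]
      omega
  · intro u hu
    simp only [mem_powersetCard] at hu
    have hiu : i ∉ u := fun hh => by simpa using hu.1 hh
    simp only [mem_filter, mem_powersetCard_univ, mem_insert]
    exact ⟨by rw [card_insert_of_notMem hiu, hu.2], Or.inl trivial⟩
  · intro t ht
    simp only [mem_filter] at ht
    exact insert_erase ht.2
  · intro u hu
    simp only [mem_powersetCard] at hu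
    have hiu : i ∉ u := fun hh => by simpa using hu.1 hh
    exact erase_insert hiu

lemma card_powersetCard_pair {i i' : α} (h : i ≠ i') (k : ℕ) :
    ((powersetCard (k+2) (univ : Finset α)).filter (fun t => i ∈ t ∧ i' ∈ t)).card
      = (Fintype.card α - 2).choose k := by
  have hc : Fintype.card α - 2 = ((univ.erase i).erase i').card := by
    rw [card_erase_of_mem (mem_erase.2 ⟨Ne.symm h, mem_univ i'⟩),
      card_erase_of_mem (mem_univ i), card_univ]
    omega
  rw [hc, ← Finset.card_powersetCard k ((univ.erase i).erase i')]
  refine Finset.card_bij' (fun t _ => (t.erase i).erase i')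
    (fun u _ => insert i (insert i' u)) ?_ ?_ ?_ ?_
  · intro t ht
    simp only [mem_filter, mem_powersetCard_univ] at ht
    simp only [mem_powersetCard]
    refine ⟨fun x hx => ?_, ?_⟩
    · simp only [mem_erase] at hx ⊢
      exact ⟨hx.1, hx.2.1, mem_univ x⟩
    · rw [card_erase_of_mem (mem_erase.2 ⟨Ne.symm h, ht.2.2⟩),
        card_erase_of_mem ht.2.1, ht.1]
      omega
  · intro u hu
    simp only [mem_powersetCard] at hu
    have hi'u : i' ∉ u := fun hh => by simpa using hu.1 hh
    have hiu : i ∉ insert i' u := by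
      simp only [mem_insert]
      rintro (rfl | hh)
      · exact h rfl
      · simpa using hu.1 hh
    simp only [mem_filter, mem_powersetCard_univ, mem_insert]
    exact ⟨by rw [card_insert_of_notMem hiu, card_insert_of_notMem hi'u, hu.2],
      Or.inl trivial, Or.inr (Or.inl trivial)⟩
  · intro t ht
    simp only [mem_filter, mem_powersetCard_univ] at ht
    exact show insert i (insert i' ((t.erase i).erase i')) = t by
      rw [insert_erase (mem_erase.2 ⟨Ne.symm h, ht.2.2⟩), insert_erase ht.2.1]
  · intro u hu
    simp only [mem_powersetCard] at hu
    have hi'u : i' ∉ u := fun hh => by simpa using hu.1 hh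
    have hiu : i ∉ insert i' u := by
      simp only [mem_insert]
      rintro (rfl | hh)
      · exact h rfl
      · simpa using hu.1 hh
    exact show ((insert i (insert i' u)).erase i).erase i' = u by
      rw [erase_insert hiu, erase_insert hi'u]

lemma count_mem_mul (i : α) (κ : ℕ) :
    ((powersetCard κ (univ : Finset α)).filter (fun t => i ∈ t)).card * Fintype.card α
      = κ * (Fintype.card α).choose κ := by
  cases κ with
  | zero =>
    simp only [Nat.zero_eq, powersetCard_zero, Nat.zero_mul]
    rw [Finset.filter_singleton]
    simp
  | succ k =>
    rw [card_powersetCard_mem i k]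
    have hne : Nonempty α := ⟨i⟩
    have hn : Fintype.card α ≠ 0 := Fintype.card_ne_zero
    obtain ⟨m, hm⟩ : ∃ m, Fintype.card α = m + 1 := ⟨Fintype.card α - 1, by omega⟩
    rw [hm]
    simp only [Nat.add_sub_cancel]
    calc m.choose k * (m + 1) = (m+1) * m.choose k := by ring
    _ = (m+1).choose (k+1) * (k+1) := Nat.add_one_mul_choose_eq m k
    _ = (k+1) * (m+1).choose (k+1) := by ring

lemma count_pair_mul {i i' : α} (h : i ≠ i') (κ : ℕ) :
    ((powersetCard κ (univ : Finset α)).filter (fun t => i ∈ t ∧ i' ∈ t)).card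
        * (Fintype.card α * (Fintype.card α - 1))
      = κ * (κ - 1) * (Fintype.card α).choose κ := by
  match κ with
  | 0 =>
    rw [show ((powersetCard 0 (univ : Finset α)).filter (fun t => i ∈ t ∧ i' ∈ t)) = ∅ by
      rw [powersetCard_zero, Finset.filter_singleton]; simp]
    simp
  | 1 =>
    rw [show ((powersetCard 1 (univ : Finset α)).filter (fun t => i ∈ t ∧ i' ∈ t)) = ∅ by
      ext t
      simp only [mem_filter, mem_powersetCard_univ, Finset.card_eq_one, notMem_empty, iff_false]
      rintro ⟨⟨x, rfl⟩, hi, hi'⟩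
      simp only [mem_singleton] at hi hi'
      exact h (hi.trans hi'.symm)]
    simp
  | (k+2) =>
    rw [card_powersetCard_pair h k]
    have h2 : 2 ≤ Fintype.card α := Fintype.one_lt_card_iff.2 ⟨i, i', h⟩
    obtain ⟨m, hm⟩ : ∃ m, Fintype.card α = m + 2 := ⟨Fintype.card α - 2, by omega⟩
    rw [hm]
    simp only [Nat.add_sub_cancel]
    have e1 : (m+2) * (m+1).choose (k+1) = (m+2).choose (k+2) * (k+2) := Nat.add_one_mul_choose_eq (m+1) (k+1)
    have e2 : (m+1) * m.choose k = (m+1).choose (k+1) * (k+1) := Nat.add_one_mul_choose_eq m k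
    have : m.choose k * ((m+2) * (m+1)) = (m+2) * ((m+1) * m.choose k) := by ring
    rw [show m + 2 - 1 = m + 1 from rfl, show k + 2 - 1 = k + 1 from rfl]
    calc m.choose k * ((m+2)*(m+1)) = (m+2) * ((m+1) * m.choose k) := by ring
    _ = (m+2) * ((m+1).choose (k+1) * (k+1)) := by rw [e2]
    _ = ((m+2) * (m+1).choose (k+1)) * (k+1) := by ring
    _ = ((m+2).choose (k+2) * (k+2)) * (k+1) := by rw [e1]
    _ = (k+2) * (k+1) * (m+2).choose (k+2) := by ring
section Part2
open Finset

variable {α : Type*} [Fintype α] [DecidableEq α]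

lemma sum_mul_offdiag (s : Finset α) (f g : α → ℝ) :
    ∑ i ∈ s, ∑ k ∈ s.erase i, f i * g k
      = (∑ i ∈ s, f i) * (∑ i ∈ s, g i) - ∑ i ∈ s, f i * g i := by
  have h : ∀ i ∈ s, ∑ k ∈ s.erase i, f i * g k = f i * (∑ k ∈ s, g k) - f i * g i := by
    intro i hi
    rw [← Finset.mul_sum]
    have h1 := Finset.add_sum_erase s g hi
    have h2 : ∑ k ∈ s.erase i, g k = (∑ k ∈ s, g k) - g i := by linarith
    rw [h2]; ring
  rw [Finset.sum_congr rfl h, Finset.sum_sub_distrib, ← Finset.sum_mul]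

lemma count_mem_real (i : α) (κ : ℕ) :
    ((((powersetCard κ (univ : Finset α)).filter (fun t => i ∈ t)).card : ℝ))
      = κ * ((Fintype.card α).choose κ) / (Fintype.card α) := by
  have hne : Nonempty α := ⟨i⟩
  have hn : (Fintype.card α : ℝ) ≠ 0 := by exact_mod_cast Fintype.card_ne_zero
  rw [eq_div_iff hn]
  exact_mod_cast count_mem_mul i κ

lemma count_pair_real {i i' : α} (h : i ≠ i') (κ : ℕ) (hκ : 1 ≤ κ) :
    ((((powersetCard κ (univ : Finset α)).filter (fun t => i ∈ t ∧ i' ∈ t)).card : ℝ))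
      = κ * ((κ : ℝ) - 1) * ((Fintype.card α).choose κ)
          / ((Fintype.card α) * ((Fintype.card α : ℝ) - 1)) := by
  have h2 : 2 ≤ Fintype.card α := Fintype.one_lt_card_iff.2 ⟨i, i', h⟩
  have h2R : (2:ℝ) ≤ (Fintype.card α : ℝ) := by exact_mod_cast h2
  have hn : (Fintype.card α : ℝ) * ((Fintype.card α : ℝ) - 1) ≠ 0 := by
    intro hc
    rcases mul_eq_zero.1 hc with hc | hc <;> nlinarith
  rw [eq_div_iff hn]
  have hnat := count_pair_mul h κ
  have hcast : ((((powersetCard κ (univ : Finset α)).filter (fun t => i ∈ t ∧ i' ∈ t)).card : ℝ))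
      * ((Fintype.card α : ℝ) * (((Fintype.card α - 1 : ℕ)) : ℝ))
      = (κ : ℝ) * (((κ - 1 : ℕ)) : ℝ) * (((Fintype.card α).choose κ : ℕ) : ℝ) := by
    exact_mod_cast hnat
  rw [Nat.cast_sub (by omega), Nat.cast_sub (by omega)] at hcast
  push_cast at hcast ⊢
  linarith [hcast]

lemma sum_eq_sum_ite (t : Finset α) (F : α → ℝ) :
    ∑ i ∈ t, F i = ∑ i ∈ univ, if i ∈ t then F i else 0 := by
  rw [← Finset.sum_filter]
  congr 1
  ext x; simp

lemma sum_erase_eq_sum_ite (i : α) (t : Finset α) (F : α → ℝ) :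
    ∑ k ∈ t.erase i, F k = ∑ k ∈ univ.erase i, if k ∈ t then F k else 0 := by
  rw [← Finset.sum_filter]
  congr 1
  ext x; simp [mem_erase, and_comm]

lemma srs_mean (Y : α → ℝ) (κ : ℕ) (hκ : κ ≠ 0) (hn0 : Fintype.card α ≠ 0) :
    ∑ t ∈ powersetCard κ (univ : Finset α), (∑ i ∈ t, Y i) / κ
      = ((Fintype.card α).choose κ) * ((∑ i, Y i) / (Fintype.card α)) := by
  have hn : (Fintype.card α : ℝ) ≠ 0 := by exact_mod_cast hn0
  have hκR : (κ : ℝ) ≠ 0 := by exact_mod_cast hκ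
  have key : ∑ t ∈ powersetCard κ (univ : Finset α), ∑ i ∈ t, Y i
      = ∑ i, Y i * ((((powersetCard κ (univ : Finset α)).filter (fun t => i ∈ t)).card : ℝ)) := by
    calc ∑ t ∈ powersetCard κ (univ : Finset α), ∑ i ∈ t, Y i
        = ∑ t ∈ powersetCard κ (univ : Finset α), ∑ i ∈ univ, if i ∈ t then Y i else 0 :=
          Finset.sum_congr rfl fun t _ => sum_eq_sum_ite t Y
      _ = ∑ i ∈ univ, ∑ t ∈ powersetCard κ (univ : Finset α), if i ∈ t then Y i else 0 :=
          Finset.sum_comm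
      _ = _ := by
          refine Finset.sum_congr rfl fun i _ => ?_
          rw [← Finset.sum_filter, Finset.sum_const, nsmul_eq_mul, mul_comm]
  have key2 : ∑ t ∈ powersetCard κ (univ : Finset α), ∑ i ∈ t, Y i
      = (∑ i, Y i) * (κ * ((Fintype.card α).choose κ) / (Fintype.card α)) := by
    rw [key]
    rw [Finset.sum_congr rfl fun i _ => by rw [count_mem_real i κ]]
    rw [← Finset.sum_mul]
  rw [← Finset.sum_div, key2]
  field_simp

lemma sum_sq_dev (Y : α → ℝ) (hn0 : Fintype.card α ≠ 0) :
    ∑ i, (Y i - (∑ k, Y k) / (Fintype.card α)) * (Y i - (∑ k, Y k) / (Fintype.card α))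
      = ∑ i, Y i * Y i - (∑ i, Y i) * (∑ i, Y i) / (Fintype.card α) := by
  have hn : (Fintype.card α : ℝ) ≠ 0 := by exact_mod_cast hn0
  set c : ℝ := (∑ k, Y k) / (Fintype.card α) with hc
  have e1 : ∑ i, (Y i - c) * (Y i - c)
      = ∑ i, Y i * Y i - c * (∑ i, Y i) - c * (∑ i, Y i) + (Fintype.card α : ℝ) * (c * c) := by
    calc ∑ i, (Y i - c) * (Y i - c)
        = ∑ i, (Y i * Y i - c * Y i - c * Y i + c * c) :=
          Finset.sum_congr rfl fun i _ => by ring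
      _ = _ := by
          rw [Finset.sum_add_distrib, Finset.sum_sub_distrib, Finset.sum_sub_distrib,
            ← Finset.mul_sum, ← Finset.mul_sum, Finset.sum_const, Finset.card_univ,
            nsmul_eq_mul]
          ring
  rw [e1, hc]
  field_simp
  ring

lemma srs_sq (Y : α → ℝ) (κ : ℕ) (hκ : κ ≠ 0) (h2 : 2 ≤ Fintype.card α) :
    ∑ t ∈ powersetCard κ (univ : Finset α), ((∑ i ∈ t, Y i) / κ) * ((∑ i ∈ t, Y i) / κ)
      = ((Fintype.card α).choose κ) *
          (((∑ i, Y i) / (Fintype.card α)) * ((∑ i, Y i) / (Fintype.card α))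
            + (1 / κ) * (1 - (κ : ℝ) / (Fintype.card α)) *
              ((∑ i, (Y i - (∑ k, Y k) / (Fintype.card α)) *
                  (Y i - (∑ k, Y k) / (Fintype.card α))) / ((Fintype.card α : ℝ) - 1))) := by
  have hn0 : Fintype.card α ≠ 0 := by omega
  have hn : (Fintype.card α : ℝ) ≠ 0 := by exact_mod_cast hn0
  have h2R : (2:ℝ) ≤ (Fintype.card α : ℝ) := by exact_mod_cast h2
  have hn1 : (Fintype.card α : ℝ) - 1 ≠ 0 := by nlinarith
  have hκR : (κ : ℝ) ≠ 0 := by exact_mod_cast hκ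
  -- expand the square of the subset sum
  have sq_expand : ∀ t : Finset α, (∑ i ∈ t, Y i) * (∑ i ∈ t, Y i)
      = ∑ i ∈ t, Y i * Y i + ∑ i ∈ t, ∑ k ∈ t.erase i, Y i * Y k := by
    intro t
    rw [sum_mul_offdiag t Y Y]
    ring
  have key : ∑ t ∈ powersetCard κ (univ : Finset α), (∑ i ∈ t, Y i) * (∑ i ∈ t, Y i)
      = (∑ i, Y i * Y i) * (κ * ((Fintype.card α).choose κ) / (Fintype.card α))
        + ((∑ i, Y i) * (∑ i, Y i) - ∑ i, Y i * Y i) *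
            (κ * ((κ : ℝ) - 1) * ((Fintype.card α).choose κ)
              / ((Fintype.card α) * ((Fintype.card α : ℝ) - 1))) := by
    rw [Finset.sum_congr rfl fun t _ => sq_expand t]
    rw [Finset.sum_add_distrib]
    congr 1
    · -- diagonal part
      calc ∑ t ∈ powersetCard κ (univ : Finset α), ∑ i ∈ t, Y i * Y i
          = ∑ t ∈ powersetCard κ (univ : Finset α), ∑ i ∈ univ,
              if i ∈ t then Y i * Y i else 0 :=
            Finset.sum_congr rfl fun t _ => sum_eq_sum_ite t _
        _ = ∑ i ∈ univ, ∑ t ∈ powersetCard κ (univ : Finset α),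
              if i ∈ t then Y i * Y i else 0 := Finset.sum_comm
        _ = ∑ i, (Y i * Y i) *
              ((((powersetCard κ (univ : Finset α)).filter (fun t => i ∈ t)).card : ℝ)) := by
            refine Finset.sum_congr rfl fun i _ => ?_
            rw [← Finset.sum_filter, Finset.sum_const, nsmul_eq_mul, mul_comm]
        _ = _ := by
            rw [Finset.sum_congr rfl fun i _ => by rw [count_mem_real i κ]]
            rw [← Finset.sum_mul]
    · -- off-diagonal part
      calc ∑ t ∈ powersetCard κ (univ : Finset α), ∑ i ∈ t, ∑ k ∈ t.erase i, Y i * Y k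
          = ∑ t ∈ powersetCard κ (univ : Finset α), ∑ i ∈ univ,
              if i ∈ t then (∑ k ∈ univ.erase i, if k ∈ t then Y i * Y k else 0) else 0 := by
            refine Finset.sum_congr rfl fun t _ => ?_
            rw [sum_eq_sum_ite t (fun i => ∑ k ∈ t.erase i, Y i * Y k)]
            refine Finset.sum_congr rfl fun i _ => ?_
            by_cases hi : i ∈ t
            · simp only [hi, if_true]
              exact sum_erase_eq_sum_ite i t _
            · simp [hi]
        _ = ∑ i ∈ univ, ∑ t ∈ powersetCard κ (univ : Finset α),
              if i ∈ t then (∑ k ∈ univ.erase i, if k ∈ t then Y i * Y k else 0) else 0 :=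
            Finset.sum_comm
        _ = ∑ i ∈ univ, ∑ k ∈ univ.erase i, ∑ t ∈ powersetCard κ (univ : Finset α),
              if i ∈ t ∧ k ∈ t then Y i * Y k else 0 := by
            refine Finset.sum_congr rfl fun i _ => ?_
            rw [← Finset.sum_comm]
            refine Finset.sum_congr rfl fun t _ => ?_
            by_cases hi : i ∈ t
            · simp only [hi, if_true, true_and]
            · simp [hi]
        _ = ∑ i ∈ univ, ∑ k ∈ univ.erase i, (Y i * Y k) *
              ((((powersetCard κ (univ : Finset α)).filter
                  (fun t => i ∈ t ∧ k ∈ t)).card : ℝ)) := by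
            refine Finset.sum_congr rfl fun i _ => Finset.sum_congr rfl fun k _ => ?_
            rw [← Finset.sum_filter, Finset.sum_const, nsmul_eq_mul, mul_comm]
        _ = _ := by
            rw [Finset.sum_congr rfl fun i _ => Finset.sum_congr rfl fun k hk => by
              rw [count_pair_real (Ne.symm (Finset.mem_erase.1 hk).1) κ (by omega)]]
            rw [Finset.sum_congr rfl fun i (_ : i ∈ univ) => (Finset.sum_mul _ _ _).symm]
            rw [← Finset.sum_mul]
            rw [sum_mul_offdiag univ Y Y]
  have lhs_eq : ∑ t ∈ powersetCard κ (univ : Finset α),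
        ((∑ i ∈ t, Y i) / κ) * ((∑ i ∈ t, Y i) / κ)
      = (∑ t ∈ powersetCard κ (univ : Finset α), (∑ i ∈ t, Y i) * (∑ i ∈ t, Y i))
          / ((κ : ℝ) * κ) := by
    rw [Finset.sum_congr rfl fun (t : Finset α) (_ : t ∈ powersetCard κ (univ : Finset α)) =>
      show ((∑ i ∈ t, Y i) / κ) * ((∑ i ∈ t, Y i) / κ)
          = ((∑ i ∈ t, Y i) * (∑ i ∈ t, Y i)) / ((κ : ℝ) * κ) by field_simp]
    rw [← Finset.sum_div]
  rw [lhs_eq, key, sum_sq_dev Y hn0]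
  field_simp
  ring

end Part2
section Part3
open Finset

variable {ι : Type*} [Fintype ι] [DecidableEq ι] {γ : ι → Type*} [∀ i, DecidableEq (γ i)]

lemma card_filter_piFinset_pair (t : ∀ i, Finset (γ i)) {j k : ι} (hjk : j ≠ k)
    {s : γ j} {s' : γ k} (hs : s ∈ t j) (hs' : s' ∈ t k) :
    ((Fintype.piFinset t).filter (fun S => S j = s ∧ S k = s')).card
      = ∏ b ∈ (univ.erase j).erase k, (t b).card := by
  have h1 : (Fintype.piFinset t).filter (fun S => S j = s ∧ S k = s')
      = (Fintype.piFinset (Function.update t j {s})).filter (fun S => S k = s') := by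
    rw [Fintype.piFinset_update_singleton_eq_filter_piFinset_eq t j hs]
    ext S
    simp only [Finset.mem_filter]
    tauto
  have hs'' : s' ∈ Function.update t j {s} k := by
    rw [Function.update_of_ne (Ne.symm hjk)]; exact hs'
  rw [h1, Fintype.card_filter_piFinset_eq_of_mem _ k hs'']
  have hjmem : j ∈ univ.erase k := Finset.mem_erase.2 ⟨hjk, mem_univ j⟩
  calc ∏ b ∈ univ.erase k, (Function.update t j {s} b).card
      = ∏ b ∈ univ.erase k, Function.update (fun b => (t b).card) j 1 b := by
        refine Finset.prod_congr rfl fun b _ => ?_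
        rcases eq_or_ne b j with rfl | hbj
        · simp
        · rw [Function.update_of_ne hbj, Function.update_of_ne hbj]
    _ = 1 * ∏ b ∈ univ.erase k \ {j}, (t b).card :=
        Finset.prod_update_of_mem hjmem _ _
    _ = ∏ b ∈ (univ.erase j).erase k, (t b).card := by
        rw [one_mul, ← Finset.erase_eq, Finset.erase_right_comm]

lemma sum_piFinset_coord (t : ∀ i, Finset (γ i)) (j : ι) (g : γ j → ℝ) :
    ∑ S ∈ Fintype.piFinset t, g (S j)
      = (∏ b ∈ univ.erase j, ((t b).card : ℝ)) * ∑ s ∈ t j, g s := by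
  have key : ∀ S ∈ Fintype.piFinset t, g (S j) = ∑ s ∈ t j, if S j = s then g s else 0 := by
    intro S hS
    rw [Finset.sum_ite_eq (t j) (S j) g]
    simp [Fintype.mem_piFinset.1 hS j]
  rw [Finset.sum_congr rfl key, Finset.sum_comm]
  have step : ∀ s ∈ t j, ∑ S ∈ Fintype.piFinset t, (if S j = s then g s else 0)
      = (∏ b ∈ univ.erase j, ((t b).card : ℝ)) * g s := by
    intro s hs
    rw [← Finset.sum_filter, Finset.sum_const, nsmul_eq_mul,
      Fintype.card_filter_piFinset_eq_of_mem t j hs]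
    push_cast
    ring
  rw [Finset.sum_congr rfl step, ← Finset.mul_sum]
lemma sum_piFinset_coord_pair (t : ∀ i, Finset (γ i)) {j k : ι} (hjk : j ≠ k)
    (g : γ j → ℝ) (h : γ k → ℝ) :
    ∑ S ∈ Fintype.piFinset t, g (S j) * h (S k)
      = (∏ b ∈ (univ.erase j).erase k, ((t b).card : ℝ))
          * ((∑ s ∈ t j, g s) * (∑ s ∈ t k, h s)) := by
  have key : ∀ S ∈ Fintype.piFinset t, g (S j) * h (S k)
      = ∑ s ∈ t j, ∑ s' ∈ t k, if S j = s ∧ S k = s' then g s * h s' else 0 := by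
    intro S hS
    have h1 : ∀ s ∈ t j, (∑ s' ∈ t k, if S j = s ∧ S k = s' then g s * h s' else 0)
        = if S j = s then g s * h (S k) else 0 := by
      intro s _
      by_cases hsj : S j = s
      · simp only [hsj, true_and, if_true]
        rw [Finset.sum_ite_eq (t k) (S k) (fun s' => g s * h s')]
        simp [Fintype.mem_piFinset.1 hS k]
      · simp [hsj]
    rw [Finset.sum_congr rfl h1, Finset.sum_ite_eq (t j) (S j) (fun s => g s * h (S k))]
    simp [Fintype.mem_piFinset.1 hS j]
  rw [Finset.sum_congr rfl key, Finset.sum_comm]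
  have step : ∀ s ∈ t j, ∑ S ∈ Fintype.piFinset t,
        ∑ s' ∈ t k, (if S j = s ∧ S k = s' then g s * h s' else 0)
      = (∏ b ∈ (univ.erase j).erase k, ((t b).card : ℝ)) * (g s * ∑ s' ∈ t k, h s') := by
    intro s hs
    rw [Finset.sum_comm]
    have inner : ∀ s' ∈ t k, ∑ S ∈ Fintype.piFinset t,
          (if S j = s ∧ S k = s' then g s * h s' else 0)
        = (∏ b ∈ (univ.erase j).erase k, ((t b).card : ℝ)) * (g s * h s') := by
      intro s' hs'
      rw [← Finset.sum_filter, Finset.sum_const, nsmul_eq_mul,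
        card_filter_piFinset_pair t hjk hs hs']
      push_cast
      ring
    rw [Finset.sum_congr rfl inner, ← Finset.mul_sum, ← Finset.mul_sum]
  rw [Finset.sum_congr rfl step, ← Finset.mul_sum, ← Finset.sum_mul]

end Part3
section Part4
open Finset

lemma exists_perm_pair {β : Type*} [DecidableEq β] {j k j' k' : β} (h : j ≠ k) (h' : j' ≠ k') :
    ∃ σ : Equiv.Perm β, σ j = j' ∧ σ k = k' := by
  refine ⟨(Equiv.swap j j').trans (Equiv.swap ((Equiv.swap j j') k) k'), ?_, ?_⟩
  · simp only [Equiv.trans_apply, Equiv.swap_apply_left]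
    have h1 : j' ≠ (Equiv.swap j j') k := by
      intro hc
      exact h (Equiv.injective _ (by rw [← hc, Equiv.swap_apply_left]))
    exact Equiv.swap_apply_of_ne_of_ne h1 h'
  · simp only [Equiv.trans_apply]
    exact Equiv.swap_apply_left _ _

namespace TwoStageDesign

variable (d : TwoStageDesign)

lemma mem_mechA_iff {A : Fin d.J → Fin d.m} :
    A ∈ d.mechA ↔ ∀ a, (Finset.univ.filter fun j => A j = a).card = d.Jc a := by
  simp [mechA]

lemma mechA_comp_perm {A : Fin d.J → Fin d.m} (σ : Equiv.Perm (Fin d.J))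
    (hA : A ∈ d.mechA) : (A ∘ σ) ∈ d.mechA := by
  rw [mem_mechA_iff] at hA ⊢
  intro b
  rw [← hA b]
  apply Finset.card_bij (fun j _ => σ j)
  · intro j hj
    simp only [mem_filter, mem_univ, true_and, Function.comp_apply] at hj ⊢
    exact hj
  · intro j1 _ j2 _ e
    exact σ.injective e
  · intro j hj
    simp only [mem_filter, mem_univ, true_and] at hj
    exact ⟨σ.symm j, by simp [hj], by simp⟩

lemma mechA_nonempty (hJsum : ∑ a, d.Jc a = d.J) : d.mechA.Nonempty := by
  have hcard : Fintype.card (Σ a : Fin d.m, Fin (d.Jc a)) = Fintype.card (Fin d.J) := by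
    simp [Fintype.card_sigma, hJsum]
  let e : (Σ a : Fin d.m, Fin (d.Jc a)) ≃ Fin d.J := Fintype.equivOfCardEq hcard
  refine ⟨fun j => (e.symm j).1, ?_⟩
  rw [mem_mechA_iff]
  intro b
  have himg : (Finset.univ.filter fun j => (e.symm j).1 = b)
      = ((Finset.univ : Finset (Fin (d.Jc b))).image (fun x => e ⟨b, x⟩)) := by
    ext j
    simp only [mem_filter, mem_univ, true_and, mem_image]
    constructor
    · intro hj
      refine ⟨hj ▸ (e.symm j).2, ?_⟩
      have h2 : (⟨b, hj ▸ (e.symm j).2⟩ : Σ a, Fin (d.Jc a)) = e.symm j := by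
        subst hj; rfl
      rw [h2, Equiv.apply_symm_apply]
    · rintro ⟨x, rfl⟩
      simp
  rw [himg, Finset.card_image_of_injective _ (fun x y hxy =>
    sigma_mk_injective (e.injective hxy))]
  simp

lemma card_filter_mechA_const (a : Fin d.m) (j j' : Fin d.J) :
    (d.mechA.filter fun A => A j = a).card = (d.mechA.filter fun A => A j' = a).card := by
  apply Finset.card_bij (fun A _ => A ∘ Equiv.swap j j')
  · intro A hA
    simp only [mem_filter] at hA ⊢
    refine ⟨d.mechA_comp_perm _ hA.1, ?_⟩
    simp only [Function.comp_apply, Equiv.swap_apply_right]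
    exact hA.2
  · intro A1 h1 A2 h2 e
    funext x
    have := congrFun e (Equiv.swap j j' x)
    simpa [Equiv.swap_apply_self] using this
  · intro B hB
    simp only [mem_filter] at hB
    refine ⟨B ∘ Equiv.swap j j', ?_, ?_⟩
    · simp only [mem_filter]
      refine ⟨d.mechA_comp_perm _ hB.1, ?_⟩
      simp only [Function.comp_apply, Equiv.swap_apply_left]
      exact hB.2
    · funext x
      simp [Equiv.swap_apply_self]

lemma card_filter_mechA_mul (a : Fin d.m) (j : Fin d.J) (hA : ∀ A ∈ d.mechA, True) :
    (d.mechA.filter fun A => A j = a).card * d.J = d.Jc a * d.mechA.card := by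
  have hsum : ∑ j' : Fin d.J, (d.mechA.filter fun A => A j' = a).card
      = d.Jc a * d.mechA.card := by
    calc ∑ j' : Fin d.J, (d.mechA.filter fun A => A j' = a).card
        = ∑ j' : Fin d.J, ∑ A ∈ d.mechA, if A j' = a then 1 else 0 :=
          Finset.sum_congr rfl fun j' _ => Finset.card_filter _ _
      _ = ∑ A ∈ d.mechA, ∑ j' : Fin d.J, if A j' = a then 1 else 0 := Finset.sum_comm
      _ = ∑ A ∈ d.mechA, d.Jc a := by
          refine Finset.sum_congr rfl fun A hA => ?_
          rw [← Finset.card_filter]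
          exact (d.mem_mechA_iff.1 hA) a
      _ = d.mechA.card * d.Jc a := by rw [Finset.sum_const, smul_eq_mul]
      _ = d.Jc a * d.mechA.card := mul_comm _ _
  calc (d.mechA.filter fun A => A j = a).card * d.J
      = ∑ j' : Fin d.J, (d.mechA.filter fun A => A j = a).card := by
        rw [Finset.sum_const, Finset.card_univ, Fintype.card_fin, smul_eq_mul, mul_comm]
    _ = ∑ j' : Fin d.J, (d.mechA.filter fun A => A j' = a).card :=
        Finset.sum_congr rfl fun j' _ => d.card_filter_mechA_const a j j'
    _ = d.Jc a * d.mechA.card := hsum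

lemma card_filter_mechA_pair_const (a : Fin d.m) {j k j' k' : Fin d.J}
    (hjk : j ≠ k) (hj'k' : j' ≠ k') :
    (d.mechA.filter fun A => A j = a ∧ A k = a).card
      = (d.mechA.filter fun A => A j' = a ∧ A k' = a).card := by
  obtain ⟨σ, hσ1, hσ2⟩ := exists_perm_pair hj'k' hjk
  apply Finset.card_bij (fun A _ => A ∘ σ)
  · intro A hA
    simp only [mem_filter] at hA ⊢
    exact ⟨d.mechA_comp_perm _ hA.1, by rw [Function.comp_apply, hσ1]; exact hA.2.1,
      by rw [Function.comp_apply, hσ2]; exact hA.2.2⟩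
  · intro A1 _ A2 _ e
    funext x
    have := congrFun e (σ.symm x)
    simpa using this
  · intro B hB
    simp only [mem_filter] at hB
    refine ⟨B ∘ σ.symm, ?_, ?_⟩
    · simp only [mem_filter]
      refine ⟨d.mechA_comp_perm _ hB.1, ?_, ?_⟩
      · rw [Function.comp_apply, show σ.symm j = j' from by rw [← hσ1, Equiv.symm_apply_apply]]
        exact hB.2.1
      · rw [Function.comp_apply, show σ.symm k = k' from by rw [← hσ2, Equiv.symm_apply_apply]]
        exact hB.2.2
    · funext x
      simp

lemma card_filter_mechA_pair_mul (a : Fin d.m) {j k : Fin d.J} (hjk : j ≠ k) :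
    (d.mechA.filter fun A => A j = a ∧ A k = a).card * (d.J * (d.J - 1))
      = d.Jc a * (d.Jc a - 1) * d.mechA.card := by
  have hsum : ∑ j' : Fin d.J, ∑ k' ∈ Finset.univ.erase j',
        (d.mechA.filter fun A => A j' = a ∧ A k' = a).card
      = d.Jc a * (d.Jc a - 1) * d.mechA.card := by
    calc ∑ j' : Fin d.J, ∑ k' ∈ Finset.univ.erase j',
          (d.mechA.filter fun A => A j' = a ∧ A k' = a).card
        = ∑ j' : Fin d.J, ∑ k' ∈ Finset.univ.erase j', ∑ A ∈ d.mechA,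
            if A j' = a ∧ A k' = a then 1 else 0 :=
          Finset.sum_congr rfl fun j' _ => Finset.sum_congr rfl fun k' _ =>
            Finset.card_filter _ _
      _ = ∑ A ∈ d.mechA, ∑ j' : Fin d.J, ∑ k' ∈ Finset.univ.erase j',
            if A j' = a ∧ A k' = a then 1 else 0 := by
          rw [← Finset.sum_comm]
          exact Finset.sum_congr rfl fun j' _ => Finset.sum_comm
      _ = ∑ A ∈ d.mechA, d.Jc a * (d.Jc a - 1) := by
          refine Finset.sum_congr rfl fun A hA => ?_
          have hF : (Finset.univ.filter fun j => A j = a).card = d.Jc a :=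
            (d.mem_mechA_iff.1 hA) a
          calc ∑ j' : Fin d.J, ∑ k' ∈ Finset.univ.erase j',
                (if A j' = a ∧ A k' = a then 1 else 0)
              = ∑ j' : Fin d.J, (if A j' = a then
                  ((Finset.univ.erase j').filter fun k' => A k' = a).card else 0) := by
                refine Finset.sum_congr rfl fun j' _ => ?_
                by_cases hj' : A j' = a
                · simp only [hj', true_and, if_true]
                  exact (Finset.card_filter _ _).symm
                · simp [hj']
            _ = ∑ j' : Fin d.J, (if A j' = a then d.Jc a - 1 else 0) := by
                refine Finset.sum_congr rfl fun j' _ => ?_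
                by_cases hj' : A j' = a
                · simp only [hj', if_true]
                  rw [Finset.filter_erase, Finset.card_erase_of_mem
                    (Finset.mem_filter.2 ⟨Finset.mem_univ j', hj'⟩), hF]
                · simp [hj']
            _ = d.Jc a * (d.Jc a - 1) := by
                rw [← Finset.sum_filter, Finset.sum_const, smul_eq_mul, hF]
      _ = d.mechA.card * (d.Jc a * (d.Jc a - 1)) := by rw [Finset.sum_const, smul_eq_mul]
      _ = d.Jc a * (d.Jc a - 1) * d.mechA.card := mul_comm _ _
  calc (d.mechA.filter fun A => A j = a ∧ A k = a).card * (d.J * (d.J - 1))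
      = ∑ j' : Fin d.J, ∑ k' ∈ Finset.univ.erase j',
          (d.mechA.filter fun A => A j = a ∧ A k = a).card := by
        rw [Finset.sum_congr rfl fun j' (_ : j' ∈ (Finset.univ : Finset (Fin d.J))) =>
          Finset.sum_const ((d.mechA.filter fun A => A j = a ∧ A k = a).card)]
        simp only [Finset.card_erase_of_mem (Finset.mem_univ _), Finset.card_univ,
          Fintype.card_fin, smul_eq_mul]
        rw [Finset.sum_const, Finset.card_univ, Fintype.card_fin, smul_eq_mul]
        ring
    _ = ∑ j' : Fin d.J, ∑ k' ∈ Finset.univ.erase j',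
          (d.mechA.filter fun A => A j' = a ∧ A k' = a).card := by
        refine Finset.sum_congr rfl fun j' _ => Finset.sum_congr rfl fun k' hk' => ?_
        exact d.card_filter_mechA_pair_const a hjk (Ne.symm (Finset.mem_erase.1 hk').1)
    _ = d.Jc a * (d.Jc a - 1) * d.mechA.card := hsum

end TwoStageDesign
end Part4
section Part5
open Finset

lemma sum_subsets_compl {n κ : ℕ} (hκ : κ ≤ n) (F : Finset (Fin n) → ℝ) :
    ∑ s ∈ Finset.powersetCard κ (univ : Finset (Fin n)), F sᶜ
      = ∑ t ∈ Finset.powersetCard (n - κ) (univ : Finset (Fin n)), F t := by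
  refine Finset.sum_nbij' (fun s => sᶜ) (fun t => tᶜ) ?_ ?_ ?_ ?_ ?_
  · intro s hs
    rw [Finset.mem_powersetCard_univ] at hs ⊢
    rw [Finset.card_compl, hs, Fintype.card_fin]
  · intro t ht
    rw [Finset.mem_powersetCard_univ] at ht ⊢
    rw [Finset.card_compl, ht, Fintype.card_fin]
    omega
  · intro s _; exact compl_compl s
  · intro t _; exact compl_compl t
  · intro s _; rfl

namespace TwoStageDesign

variable (d : TwoStageDesign)

lemma treatA_eq (A : Fin d.J → Fin d.m) :
    d.treatA A = Fintype.piFinset (fun j => Finset.powersetCard (d.n1 j (A j)) Finset.univ) := by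
  ext S
  simp [treatA, Fintype.mem_piFinset, Finset.mem_powersetCard_univ]

lemma hatYj_eq (A : Fin d.J → Fin d.m) (S : (j : Fin d.J) → Finset (Fin (d.n j)))
    (z : Bool) (j : Fin d.J) :
    d.hatYj A S z j
      = (∑ i ∈ (if z then S j else (S j)ᶜ), d.Y j i z (A j))
          / (((if z then S j else (S j)ᶜ) : Finset (Fin (d.n j))).card : ℝ) := by
  unfold hatYj
  have hfil : (Finset.univ.filter (fun i : Fin (d.n j) => decide (i ∈ S j) = z))
      = (if z then S j else (S j)ᶜ) := by
    cases z
    · ext i; simp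
    · ext i; simp
  have hsum : ∑ i ∈ Finset.univ.filter (fun i : Fin (d.n j) => decide (i ∈ S j) = z),
        d.Yobs A S j i
      = ∑ i ∈ Finset.univ.filter (fun i : Fin (d.n j) => decide (i ∈ S j) = z),
        d.Y j i z (A j) := by
    refine Finset.sum_congr rfl fun i hi => ?_
    have := (Finset.mem_filter.1 hi).2
    unfold Yobs
    rw [this]
  rw [hsum, hfil]

lemma nz_le (z : Bool) (j : Fin d.J) (a : Fin d.m) (hlo : 1 ≤ d.n1 j a)
    (hhi : d.n1 j a ≤ d.n j - 1) (hn : 2 ≤ d.n j) : d.nz z j a ≤ d.n j - 1 := by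
  cases z <;> simp [nz] <;> omega

lemma nz_pos (z : Bool) (j : Fin d.J) (a : Fin d.m) (hlo : 1 ≤ d.n1 j a)
    (hhi : d.n1 j a ≤ d.n j - 1) (hn : 2 ≤ d.n j) : 1 ≤ d.nz z j a := by
  cases z <;> simp [nz] <;> omega

/-- second-stage per-cluster mean -/
lemma cluster_mean (z : Bool) (j : Fin d.J) (a : Fin d.m) (hn : 2 ≤ d.n j)
    (hlo : 1 ≤ d.n1 j a) (hhi : d.n1 j a ≤ d.n j - 1) :
    ∑ s ∈ Finset.powersetCard (d.n1 j a) (univ : Finset (Fin (d.n j))),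
        ((∑ i ∈ (if z then s else sᶜ), d.Y j i z a)
          / (((if z then s else sᶜ) : Finset (Fin (d.n j))).card : ℝ))
      = ((d.n j).choose (d.n1 j a) : ℝ) * d.Ybarj j z a := by
  have hκ0 : d.nz z j a ≠ 0 := by
    have := d.nz_pos z j a hlo hhi hn; omega
  have hcard : ∀ s ∈ Finset.powersetCard (d.n1 j a) (univ : Finset (Fin (d.n j))),
      (((if z then s else sᶜ) : Finset (Fin (d.n j))).card : ℕ) = d.nz z j a := by
    intro s hs
    rw [Finset.mem_powersetCard_univ] at hs
    cases z
    · simp only [Bool.false_eq_true, if_false, Finset.card_compl, hs, Fintype.card_fin]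
      simp [nz]
    · simpa [nz] using hs
  have step1 : ∑ s ∈ Finset.powersetCard (d.n1 j a) (univ : Finset (Fin (d.n j))),
        ((∑ i ∈ (if z then s else sᶜ), d.Y j i z a)
          / (((if z then s else sᶜ) : Finset (Fin (d.n j))).card : ℝ))
      = ∑ s ∈ Finset.powersetCard (d.n1 j a) (univ : Finset (Fin (d.n j))),
        ((∑ i ∈ (if z then s else sᶜ), d.Y j i z a) / (d.nz z j a : ℝ)) := by
    refine Finset.sum_congr rfl fun s hs => by rw [hcard s hs]
  rw [step1]
  have step2 : ∑ s ∈ Finset.powersetCard (d.n1 j a) (univ : Finset (Fin (d.n j))),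
        ((∑ i ∈ (if z then s else sᶜ), d.Y j i z a) / (d.nz z j a : ℝ))
      = ∑ t ∈ Finset.powersetCard (d.nz z j a) (univ : Finset (Fin (d.n j))),
        ((∑ i ∈ t, d.Y j i z a) / (d.nz z j a : ℝ)) := by
    cases z
    · rw [show d.nz false j a = d.n j - d.n1 j a from rfl]
      simp only [Bool.false_eq_true, if_false]
      exact sum_subsets_compl (n := d.n j) (κ := d.n1 j a) (by omega)
        (fun t => (∑ i ∈ t, d.Y j i false a) / ((d.n j - d.n1 j a : ℕ) : ℝ))
    · simp [nz]
  rw [step2]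
  have := srs_mean (fun i : Fin (d.n j) => d.Y j i z a) (d.nz z j a) hκ0
    (by rw [Fintype.card_fin]; omega)
  rw [Fintype.card_fin] at this
  rw [this]
  have hch : (d.n j).choose (d.nz z j a) = (d.n j).choose (d.n1 j a) := by
    cases z
    · rw [show d.nz false j a = d.n j - d.n1 j a from rfl]
      exact Nat.choose_symm (by omega)
    · rfl
  rw [hch]
  rfl

/-- second-stage per-cluster second moment -/
lemma cluster_sq (z : Bool) (j : Fin d.J) (a : Fin d.m) (hn : 2 ≤ d.n j)
    (hlo : 1 ≤ d.n1 j a) (hhi : d.n1 j a ≤ d.n j - 1) :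
    ∑ s ∈ Finset.powersetCard (d.n1 j a) (univ : Finset (Fin (d.n j))),
        (((∑ i ∈ (if z then s else sᶜ), d.Y j i z a)
          / (((if z then s else sᶜ) : Finset (Fin (d.n j))).card : ℝ)) *
         ((∑ i ∈ (if z then s else sᶜ), d.Y j i z a)
          / (((if z then s else sᶜ) : Finset (Fin (d.n j))).card : ℝ)))
      = ((d.n j).choose (d.n1 j a) : ℝ) *
          (d.Ybarj j z a * d.Ybarj j z a
            + (1 / (d.nz z j a : ℝ)) * (1 - (d.nz z j a : ℝ) / (d.n j : ℝ)) *
              d.sigU j z z a a) := by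
  have hκ0 : d.nz z j a ≠ 0 := by
    have := d.nz_pos z j a hlo hhi hn; omega
  have hcard : ∀ s ∈ Finset.powersetCard (d.n1 j a) (univ : Finset (Fin (d.n j))),
      (((if z then s else sᶜ) : Finset (Fin (d.n j))).card : ℕ) = d.nz z j a := by
    intro s hs
    rw [Finset.mem_powersetCard_univ] at hs
    cases z
    · simp only [Bool.false_eq_true, if_false, Finset.card_compl, hs, Fintype.card_fin]
      simp [nz]
    · simpa [nz] using hs
  have step1 : ∑ s ∈ Finset.powersetCard (d.n1 j a) (univ : Finset (Fin (d.n j))),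
        (((∑ i ∈ (if z then s else sᶜ), d.Y j i z a)
          / (((if z then s else sᶜ) : Finset (Fin (d.n j))).card : ℝ)) *
         ((∑ i ∈ (if z then s else sᶜ), d.Y j i z a)
          / (((if z then s else sᶜ) : Finset (Fin (d.n j))).card : ℝ)))
      = ∑ s ∈ Finset.powersetCard (d.n1 j a) (univ : Finset (Fin (d.n j))),
        (((∑ i ∈ (if z then s else sᶜ), d.Y j i z a) / (d.nz z j a : ℝ)) *
         ((∑ i ∈ (if z then s else sᶜ), d.Y j i z a) / (d.nz z j a : ℝ))) := by
    refine Finset.sum_congr rfl fun s hs => by rw [hcard s hs]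
  rw [step1]
  have step2 : ∑ s ∈ Finset.powersetCard (d.n1 j a) (univ : Finset (Fin (d.n j))),
        (((∑ i ∈ (if z then s else sᶜ), d.Y j i z a) / (d.nz z j a : ℝ)) *
         ((∑ i ∈ (if z then s else sᶜ), d.Y j i z a) / (d.nz z j a : ℝ)))
      = ∑ t ∈ Finset.powersetCard (d.nz z j a) (univ : Finset (Fin (d.n j))),
        (((∑ i ∈ t, d.Y j i z a) / (d.nz z j a : ℝ)) *
         ((∑ i ∈ t, d.Y j i z a) / (d.nz z j a : ℝ))) := by
    cases z
    · rw [show d.nz false j a = d.n j - d.n1 j a from rfl]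
      simp only [Bool.false_eq_true, if_false]
      exact sum_subsets_compl (n := d.n j) (κ := d.n1 j a) (by omega)
        (fun t => ((∑ i ∈ t, d.Y j i false a) / ((d.n j - d.n1 j a : ℕ) : ℝ)) *
          ((∑ i ∈ t, d.Y j i false a) / ((d.n j - d.n1 j a : ℕ) : ℝ)))
    · simp [nz]
  rw [step2]
  have hsq := srs_sq (fun i : Fin (d.n j) => d.Y j i z a) (d.nz z j a) hκ0
    (by rw [Fintype.card_fin]; omega)
  rw [Fintype.card_fin] at hsq
  rw [hsq]
  have hch : (d.n j).choose (d.nz z j a) = (d.n j).choose (d.n1 j a) := by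
    cases z
    · rw [show d.nz false j a = d.n j - d.n1 j a from rfl]
      exact Nat.choose_symm (by omega)
    · rfl
  rw [hch]
  have hY : d.Ybarj j z a = (∑ k : Fin (d.n j), d.Y j k z a) / ((d.n j : ℝ)) := rfl
  have hsig : d.sigU j z z a a
      = (∑ i : Fin (d.n j), (d.Y j i z a - (∑ k : Fin (d.n j), d.Y j k z a) / (d.n j : ℝ)) *
          (d.Y j i z a - (∑ k : Fin (d.n j), d.Y j k z a) / (d.n j : ℝ)))
          / ((d.n j : ℝ) - 1) := by
    unfold sigU Ybarj
    rfl
  rw [hsig, hY]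

end TwoStageDesign
end Part5
section Part6
open Finset

lemma sum_sub_sq {β : Type*} (s : Finset β) (f : β → ℝ) (c : ℝ) :
    ∑ j ∈ s, (f j - c) * (f j - c)
      = ∑ j ∈ s, f j * f j - 2 * c * ∑ j ∈ s, f j + (s.card : ℝ) * (c * c) := by
  calc ∑ j ∈ s, (f j - c) * (f j - c)
      = ∑ j ∈ s, (f j * f j - c * f j - c * f j + c * c) :=
        Finset.sum_congr rfl fun j _ => by ring
    _ = _ := by
        rw [Finset.sum_add_distrib, Finset.sum_sub_distrib, Finset.sum_sub_distrib,
          ← Finset.mul_sum, ← Finset.mul_sum, Finset.sum_const, nsmul_eq_mul]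
        ring

namespace TwoStageDesign

variable (d : TwoStageDesign)

def gX (A : Fin d.J → Fin d.m) (z : Bool) (j : Fin d.J)
    (s : Finset (Fin (d.n j))) : ℝ :=
  (∑ i ∈ (if z then s else sᶜ), d.Y j i z (A j)) /
    (((if z then s else sᶜ) : Finset (Fin (d.n j))).card : ℝ)

lemma hatYj_eq_gX (A : Fin d.J → Fin d.m) (S : (j : Fin d.J) → Finset (Fin (d.n j)))
    (z : Bool) (j : Fin d.J) : d.hatYj A S z j = d.gX A z j (S j) := by
  rw [d.hatYj_eq A S z j]; rfl

lemma sigBhat_expand (A : Fin d.J → Fin d.m) (S : (j : Fin d.J) → Finset (Fin (d.n j)))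
    (z : Bool) (a : Fin d.m) (hJa0 : (d.Jc a : ℝ) ≠ 0)
    (hG : (Finset.univ.filter fun j => A j = a).card = d.Jc a) :
    d.sigBhat A S z z a
      = (1 / ((d.Jc a : ℝ) - 1)) *
          ((1 - 1 / (d.Jc a : ℝ)) *
              (∑ j ∈ Finset.univ.filter (fun j => A j = a),
                d.hatYj A S z j * d.hatYj A S z j)
            - (1 / (d.Jc a : ℝ)) *
              ∑ j ∈ Finset.univ.filter (fun j => A j = a),
                ∑ k ∈ (Finset.univ.filter (fun j => A j = a)).erase j,
                  d.hatYj A S z j * d.hatYj A S z k) := by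
  unfold sigBhat hatY
  rw [sum_sub_sq, sum_mul_offdiag, hG]
  have key : ∀ Sxx Sx Ja : ℝ, Ja ≠ 0 →
      Sxx - 2 * (Sx / Ja) * Sx + Ja * ((Sx / Ja) * (Sx / Ja))
        = (1 - 1 / Ja) * Sxx - (1 / Ja) * (Sx * Sx - Sxx) := by
    intro Sxx Sx Ja hJa
    field_simp
    ring
  rw [key _ _ _ hJa0]
  ring

lemma treatA_card_real (A : Fin d.J → Fin d.m) :
    ((d.treatA A).card : ℝ)
      = ∏ b, (((Finset.powersetCard (d.n1 b (A b)) (Finset.univ : Finset (Fin (d.n b)))).card : ℝ)) := by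
  rw [d.treatA_eq A, Fintype.card_piFinset]
  push_cast
  rfl

set_option maxHeartbeats 2000000 in
lemma expec_given_A (z : Bool) (a : Fin d.m) (A : Fin d.J → Fin d.m)
    (hA : A ∈ d.mechA) (hn : ∀ j, 2 ≤ d.n j)
    (hn1lo : ∀ j b, 1 ≤ d.n1 j b) (hn1hi : ∀ j b, d.n1 j b ≤ d.n j - 1)
    (hJa : 2 ≤ d.Jc a) :
    ∑ S ∈ d.treatA A, d.sigBhat A S z z a
      = ((d.treatA A).card : ℝ) *
          ((1 / ((d.Jc a : ℝ) - 1)) *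
            ((1 - 1 / (d.Jc a : ℝ)) *
                (∑ j ∈ Finset.univ.filter (fun j => A j = a),
                  (d.Ybarj j z a * d.Ybarj j z a
                    + (1 / (d.nz z j a : ℝ)) * (1 - (d.nz z j a : ℝ) / (d.n j : ℝ)) *
                      d.sigU j z z a a))
              - (1 / (d.Jc a : ℝ)) *
                ∑ j ∈ Finset.univ.filter (fun j => A j = a),
                  ∑ k ∈ (Finset.univ.filter (fun j => A j = a)).erase j,
                    d.Ybarj j z a * d.Ybarj k z a)) := by
  have hJa0 : (d.Jc a : ℝ) ≠ 0 := by
    have : (0:ℝ) < (d.Jc a : ℝ) := by exact_mod_cast Nat.lt_of_lt_of_le Nat.zero_lt_two hJa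
    linarith
  have hG : (Finset.univ.filter fun j => A j = a).card = d.Jc a := d.mem_mechA_iff.1 hA a
  rw [Finset.sum_congr rfl (fun S _ => d.sigBhat_expand A S z a hJa0 hG)]
  rw [← Finset.mul_sum, Finset.sum_sub_distrib, ← Finset.mul_sum, ← Finset.mul_sum]
  -- now compute the two S-sums
  have hT1 : ∑ S ∈ d.treatA A, ∑ j ∈ Finset.univ.filter (fun j => A j = a),
        d.hatYj A S z j * d.hatYj A S z j
      = ((d.treatA A).card : ℝ) *
          ∑ j ∈ Finset.univ.filter (fun j => A j = a),
            (d.Ybarj j z a * d.Ybarj j z a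
              + (1 / (d.nz z j a : ℝ)) * (1 - (d.nz z j a : ℝ) / (d.n j : ℝ)) *
                d.sigU j z z a a) := by
    rw [Finset.sum_comm, Finset.mul_sum]
    refine Finset.sum_congr rfl fun j hj => ?_
    have haj : A j = a := (Finset.mem_filter.1 hj).2
    calc ∑ S ∈ d.treatA A, d.hatYj A S z j * d.hatYj A S z j
        = ∑ S ∈ d.treatA A, d.gX A z j (S j) * d.gX A z j (S j) :=
          Finset.sum_congr rfl fun S _ => by rw [d.hatYj_eq_gX A S z j]
      _ = (∏ b ∈ Finset.univ.erase j,
              (((Finset.powersetCard (d.n1 b (A b)) (Finset.univ : Finset (Fin (d.n b)))).card : ℝ)))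
            * ∑ s ∈ Finset.powersetCard (d.n1 j (A j)) Finset.univ,
              (d.gX A z j s * d.gX A z j s) := by
          rw [d.treatA_eq A]
          exact sum_piFinset_coord
            (fun b => Finset.powersetCard (d.n1 b (A b)) (Finset.univ : Finset (Fin (d.n b))))
            j (fun s => d.gX A z j s * d.gX A z j s)
      _ = _ := by
          simp only [gX]
          rw [haj]
          rw [d.cluster_sq z j a (hn j) (hn1lo j a) (hn1hi j a)]
          rw [d.treatA_card_real A]
          rw [← Finset.prod_erase_mul Finset.univ _ (Finset.mem_univ j)]
          rw [Finset.card_powersetCard, Finset.card_univ, Fintype.card_fin, haj]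
          ring
  have hT2 : ∑ S ∈ d.treatA A, ∑ j ∈ Finset.univ.filter (fun j => A j = a),
        ∑ k ∈ (Finset.univ.filter (fun j => A j = a)).erase j,
          d.hatYj A S z j * d.hatYj A S z k
      = ((d.treatA A).card : ℝ) *
          ∑ j ∈ Finset.univ.filter (fun j => A j = a),
            ∑ k ∈ (Finset.univ.filter (fun j => A j = a)).erase j,
              d.Ybarj j z a * d.Ybarj k z a := by
    rw [Finset.sum_comm, Finset.mul_sum]
    refine Finset.sum_congr rfl fun j hj => ?_
    rw [Finset.sum_comm, Finset.mul_sum]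
    refine Finset.sum_congr rfl fun k hk => ?_
    have haj : A j = a := (Finset.mem_filter.1 hj).2
    have hkj : k ≠ j := (Finset.mem_erase.1 hk).1
    have hak : A k = a := (Finset.mem_filter.1 (Finset.mem_erase.1 hk).2).2
    have hjk : j ≠ k := Ne.symm hkj
    calc ∑ S ∈ d.treatA A, d.hatYj A S z j * d.hatYj A S z k
        = ∑ S ∈ d.treatA A, d.gX A z j (S j) * d.gX A z k (S k) :=
          Finset.sum_congr rfl fun S _ => by
            rw [d.hatYj_eq_gX A S z j, d.hatYj_eq_gX A S z k]
      _ = (∏ b ∈ (Finset.univ.erase j).erase k,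
              (((Finset.powersetCard (d.n1 b (A b)) (Finset.univ : Finset (Fin (d.n b)))).card : ℝ)))
            * ((∑ s ∈ Finset.powersetCard (d.n1 j (A j)) Finset.univ, d.gX A z j s) *
               (∑ s ∈ Finset.powersetCard (d.n1 k (A k)) Finset.univ, d.gX A z k s)) := by
          rw [d.treatA_eq A]
          exact sum_piFinset_coord_pair
            (fun b => Finset.powersetCard (d.n1 b (A b)) (Finset.univ : Finset (Fin (d.n b))))
            hjk (d.gX A z j) (d.gX A z k)
      _ = _ := by
          simp only [gX]
          rw [haj, hak]
          rw [d.cluster_mean z j a (hn j) (hn1lo j a) (hn1hi j a)]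
          rw [d.cluster_mean z k a (hn k) (hn1lo k a) (hn1hi k a)]
          rw [d.treatA_card_real A]
          have h1 : (∏ b ∈ (Finset.univ.erase k).erase j,
                (((Finset.powersetCard (d.n1 b (A b)) (Finset.univ : Finset (Fin (d.n b)))).card : ℝ)))
              * (((Finset.powersetCard (d.n1 j (A j)) (Finset.univ : Finset (Fin (d.n j)))).card : ℝ))
              = ∏ b ∈ Finset.univ.erase k,
                (((Finset.powersetCard (d.n1 b (A b)) (Finset.univ : Finset (Fin (d.n b)))).card : ℝ)) :=
            Finset.prod_erase_mul _ _ (Finset.mem_erase.2 ⟨hjk, Finset.mem_univ j⟩)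
          have h2 : (∏ b ∈ Finset.univ.erase k,
                (((Finset.powersetCard (d.n1 b (A b)) (Finset.univ : Finset (Fin (d.n b)))).card : ℝ)))
              * (((Finset.powersetCard (d.n1 k (A k)) (Finset.univ : Finset (Fin (d.n k)))).card : ℝ))
              = ∏ b, (((Finset.powersetCard (d.n1 b (A b)) (Finset.univ : Finset (Fin (d.n b)))).card : ℝ)) :=
            Finset.prod_erase_mul _ _ (Finset.mem_univ k)
          rw [Finset.erase_right_comm (s := (Finset.univ : Finset (Fin d.J))) (a := j) (b := k)]
          rw [← h2, ← h1]
          rw [Finset.card_powersetCard, Finset.card_univ, Fintype.card_fin, haj]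
          rw [Finset.card_powersetCard, Finset.card_univ, Fintype.card_fin, hak]
          ring
  rw [hT1, hT2]
  ring

end TwoStageDesign
end Part6

set_option maxHeartbeats 2000000 in
/-- **Expectation of the between-cluster sample variance.** Under the two-stage
randomized design, for every `z` and mechanism `a` with `J_a ≥ 2`,
`E[σ̂_b²(z,a)] = σ_b²(z,a) + (1/J) ∑_j (1/n_{jz}(a))(1 − n_{jz}(a)/n_j) σ_j²(z,a)`. -/
theorem expec_sigBhat_var (d : TwoStageDesign)
    (hJ : 2 ≤ d.J) (hn : ∀ j, 2 ≤ d.n j)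
    (hJc : ∀ a, 1 ≤ d.Jc a) (hJsum : ∑ a, d.Jc a = d.J)
    (hn1lo : ∀ j a, 1 ≤ d.n1 j a) (hn1hi : ∀ j a, d.n1 j a ≤ d.n j - 1)
    (z : Bool) (a : Fin d.m) (hJa : 2 ≤ d.Jc a) :
    d.expec (fun A S => d.sigBhat A S z z a) =
      d.sigB z z a a +
        (1 / (d.J : ℝ)) *
          ∑ j, (1 / (d.nz z j a : ℝ)) * (1 - (d.nz z j a : ℝ) / (d.n j : ℝ)) *
            d.sigU j z z a a := by
  classical
  have hMne : d.mechA.Nonempty := d.mechA_nonempty hJsum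
  have hMc0 : (d.mechA.card : ℝ) ≠ 0 := by
    have h := Finset.card_pos.2 hMne
    exact_mod_cast Nat.pos_iff_ne_zero.1 h
  have hJR : (d.J : ℝ) ≠ 0 := by
    have : (0:ℝ) < (d.J : ℝ) := by exact_mod_cast Nat.lt_of_lt_of_le Nat.zero_lt_two hJ
    linarith
  have hJR1 : (d.J : ℝ) - 1 ≠ 0 := by
    have : (2:ℝ) ≤ (d.J : ℝ) := by exact_mod_cast hJ
    intro hc; linarith
  have hJaR : (d.Jc a : ℝ) ≠ 0 := by
    have : (0:ℝ) < (d.Jc a : ℝ) := by exact_mod_cast Nat.lt_of_lt_of_le Nat.zero_lt_two hJa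
    linarith
  have hJaR1 : (d.Jc a : ℝ) - 1 ≠ 0 := by
    have : (2:ℝ) ≤ (d.Jc a : ℝ) := by exact_mod_cast hJa
    intro hc; linarith
  have hTC0 : ∀ A ∈ d.mechA, ((d.treatA A).card : ℝ) ≠ 0 := by
    intro A _
    rw [d.treatA_card_real A]
    refine Finset.prod_ne_zero_iff.2 fun b _ => ?_
    have hpos : 0 < (d.n b).choose (d.n1 b (A b)) :=
      Nat.choose_pos (by have := hn1hi b (A b); have := hn b; omega)
    rw [Finset.card_powersetCard, Finset.card_univ, Fintype.card_fin]
    exact_mod_cast Nat.pos_iff_ne_zero.1 hpos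
  -- count constants
  have hcnt1 : ∀ j : Fin d.J, (((d.mechA.filter fun A => A j = a).card : ℝ))
      = (d.Jc a : ℝ) * (d.mechA.card : ℝ) / (d.J : ℝ) := by
    intro j
    rw [eq_div_iff hJR]
    exact_mod_cast d.card_filter_mechA_mul a j (fun _ _ => trivial)
  have hJJne : (d.J : ℝ) * ((d.J : ℝ) - 1) ≠ 0 := mul_ne_zero hJR hJR1
  have hcnt2 : ∀ j k : Fin d.J, j ≠ k →
      (((d.mechA.filter fun A => A j = a ∧ A k = a).card : ℝ))
        = (d.Jc a : ℝ) * ((d.Jc a : ℝ) - 1) * (d.mechA.card : ℝ)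
            / ((d.J : ℝ) * ((d.J : ℝ) - 1)) := by
    intro j k hjk
    rw [eq_div_iff hJJne]
    have hnat := d.card_filter_mechA_pair_mul a hjk
    have h1 : ((d.J - 1 : ℕ) : ℝ) = (d.J : ℝ) - 1 := by
      rw [Nat.cast_sub (le_of_lt hJ), Nat.cast_one]
    have h2 : ((d.Jc a - 1 : ℕ) : ℝ) = (d.Jc a : ℝ) - 1 := by
      rw [Nat.cast_sub (hJc a), Nat.cast_one]
    rw [← h1, ← h2]
    exact_mod_cast hnat
  -- Step 1: reduce the inner S-sums
  have step1 : ∀ A ∈ d.mechA,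
      ∑ S ∈ d.treatA A,
          d.sigBhat A S z z a / ((d.mechA.card : ℝ) * ((d.treatA A).card : ℝ))
        = ((1 / ((d.Jc a : ℝ) - 1)) *
            ((1 - 1 / (d.Jc a : ℝ)) *
                (∑ j ∈ Finset.univ.filter (fun j => A j = a),
                  (d.Ybarj j z a * d.Ybarj j z a
                    + (1 / (d.nz z j a : ℝ)) * (1 - (d.nz z j a : ℝ) / (d.n j : ℝ)) *
                      d.sigU j z z a a))
              - (1 / (d.Jc a : ℝ)) *
                ∑ j ∈ Finset.univ.filter (fun j => A j = a),
                  ∑ k ∈ (Finset.univ.filter (fun j => A j = a)).erase j,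
                    d.Ybarj j z a * d.Ybarj k z a)) / (d.mechA.card : ℝ) := by
    intro A hA
    rw [← Finset.sum_div, d.expec_given_A z a A hA hn hn1lo hn1hi hJa,
      mul_comm ((d.mechA.card : ℝ)) (((d.treatA A).card : ℝ)),
      mul_div_mul_left _ _ (hTC0 A hA)]
  show ∑ A ∈ d.mechA, ∑ S ∈ d.treatA A,
      d.sigBhat A S z z a / ((d.mechA.card : ℝ) * ((d.treatA A).card : ℝ)) = _
  rw [Finset.sum_congr rfl step1, ← Finset.sum_div]
  rw [← Finset.mul_sum, Finset.sum_sub_distrib, ← Finset.mul_sum, ← Finset.mul_sum]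
  -- Step 2: the A-sums
  have hE1 : ∑ A ∈ d.mechA, ∑ j ∈ Finset.univ.filter (fun j => A j = a),
        (d.Ybarj j z a * d.Ybarj j z a
          + (1 / (d.nz z j a : ℝ)) * (1 - (d.nz z j a : ℝ) / (d.n j : ℝ)) *
            d.sigU j z z a a)
      = ((d.Jc a : ℝ) * (d.mechA.card : ℝ) / (d.J : ℝ)) *
          ∑ j, (d.Ybarj j z a * d.Ybarj j z a
            + (1 / (d.nz z j a : ℝ)) * (1 - (d.nz z j a : ℝ) / (d.n j : ℝ)) *
              d.sigU j z z a a) := by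
    calc ∑ A ∈ d.mechA, ∑ j ∈ Finset.univ.filter (fun j => A j = a),
          (d.Ybarj j z a * d.Ybarj j z a
            + (1 / (d.nz z j a : ℝ)) * (1 - (d.nz z j a : ℝ) / (d.n j : ℝ)) *
              d.sigU j z z a a)
        = ∑ A ∈ d.mechA, ∑ j ∈ Finset.univ, (if A j = a then
            (d.Ybarj j z a * d.Ybarj j z a
              + (1 / (d.nz z j a : ℝ)) * (1 - (d.nz z j a : ℝ) / (d.n j : ℝ)) *
                d.sigU j z z a a) else 0) :=
          Finset.sum_congr rfl fun A _ => Finset.sum_filter _ _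
      _ = ∑ j ∈ Finset.univ, ∑ A ∈ d.mechA, (if A j = a then
            (d.Ybarj j z a * d.Ybarj j z a
              + (1 / (d.nz z j a : ℝ)) * (1 - (d.nz z j a : ℝ) / (d.n j : ℝ)) *
                d.sigU j z z a a) else 0) := Finset.sum_comm
      _ = ∑ j ∈ Finset.univ, (d.Ybarj j z a * d.Ybarj j z a
              + (1 / (d.nz z j a : ℝ)) * (1 - (d.nz z j a : ℝ) / (d.n j : ℝ)) *
                d.sigU j z z a a) * ((d.Jc a : ℝ) * (d.mechA.card : ℝ) / (d.J : ℝ)) := by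
          refine Finset.sum_congr rfl fun j _ => ?_
          rw [← Finset.sum_filter, Finset.sum_const, nsmul_eq_mul, mul_comm, hcnt1 j]
      _ = _ := by
          rw [← Finset.sum_mul]
          ring
  have hE2 : ∑ A ∈ d.mechA, ∑ j ∈ Finset.univ.filter (fun j => A j = a),
        ∑ k ∈ (Finset.univ.filter (fun j => A j = a)).erase j,
          d.Ybarj j z a * d.Ybarj k z a
      = ((d.Jc a : ℝ) * ((d.Jc a : ℝ) - 1) * (d.mechA.card : ℝ)
          / ((d.J : ℝ) * ((d.J : ℝ) - 1))) *
          ∑ j ∈ Finset.univ, ∑ k ∈ Finset.univ.erase j,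
            d.Ybarj j z a * d.Ybarj k z a := by
    have conv : ∀ A : Fin d.J → Fin d.m,
        ∑ j ∈ Finset.univ.filter (fun j => A j = a),
          ∑ k ∈ (Finset.univ.filter (fun j => A j = a)).erase j,
            d.Ybarj j z a * d.Ybarj k z a
        = ∑ j ∈ Finset.univ, ∑ k ∈ Finset.univ.erase j,
            (if A j = a ∧ A k = a then d.Ybarj j z a * d.Ybarj k z a else 0) := by
      intro A
      rw [Finset.sum_filter]
      refine Finset.sum_congr rfl fun j _ => ?_
      by_cases hj : A j = a
      · simp only [hj, if_true, true_and]
        rw [← Finset.filter_erase, Finset.sum_filter]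
      · simp [hj]
    rw [Finset.sum_congr rfl fun A (_ : A ∈ d.mechA) => conv A]
    calc ∑ A ∈ d.mechA, ∑ j ∈ Finset.univ, ∑ k ∈ Finset.univ.erase j,
          (if A j = a ∧ A k = a then d.Ybarj j z a * d.Ybarj k z a else 0)
        = ∑ j ∈ Finset.univ, ∑ k ∈ Finset.univ.erase j, ∑ A ∈ d.mechA,
            (if A j = a ∧ A k = a then d.Ybarj j z a * d.Ybarj k z a else 0) := by
          rw [Finset.sum_comm]
          exact Finset.sum_congr rfl fun j _ => Finset.sum_comm
      _ = ∑ j ∈ Finset.univ, ∑ k ∈ Finset.univ.erase j,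
            (d.Ybarj j z a * d.Ybarj k z a) *
              ((d.Jc a : ℝ) * ((d.Jc a : ℝ) - 1) * (d.mechA.card : ℝ)
                / ((d.J : ℝ) * ((d.J : ℝ) - 1))) := by
          refine Finset.sum_congr rfl fun j _ => Finset.sum_congr rfl fun k hk => ?_
          rw [← Finset.sum_filter, Finset.sum_const, nsmul_eq_mul, mul_comm,
            hcnt2 j k (Ne.symm (Finset.mem_erase.1 hk).1)]
      _ = _ := by
          rw [Finset.sum_congr rfl fun j (_ : j ∈ (Finset.univ : Finset (Fin d.J))) =>
            (Finset.sum_mul _ _ _).symm]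
          rw [← Finset.sum_mul]
          ring
  rw [hE1, hE2]
  -- Step 3: scalar algebra
  have hoffd : ∑ j ∈ Finset.univ, ∑ k ∈ Finset.univ.erase j,
        d.Ybarj j z a * d.Ybarj k z a
      = (∑ j, d.Ybarj j z a) * (∑ j, d.Ybarj j z a)
        - ∑ j, d.Ybarj j z a * d.Ybarj j z a :=
    sum_mul_offdiag Finset.univ (fun j => d.Ybarj j z a) (fun j => d.Ybarj j z a)
  have hsplit : ∑ j, (d.Ybarj j z a * d.Ybarj j z a
        + (1 / (d.nz z j a : ℝ)) * (1 - (d.nz z j a : ℝ) / (d.n j : ℝ)) *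
          d.sigU j z z a a)
      = (∑ j, d.Ybarj j z a * d.Ybarj j z a)
        + ∑ j, (1 / (d.nz z j a : ℝ)) * (1 - (d.nz z j a : ℝ) / (d.n j : ℝ)) *
            d.sigU j z z a a := Finset.sum_add_distrib
  have hsigB : d.sigB z z a a
      = ((∑ j, d.Ybarj j z a * d.Ybarj j z a)
          - 2 * ((∑ j, d.Ybarj j z a) / (d.J : ℝ)) * (∑ j, d.Ybarj j z a)
          + (d.J : ℝ) * (((∑ j, d.Ybarj j z a) / (d.J : ℝ)) *
              ((∑ j, d.Ybarj j z a) / (d.J : ℝ)))) / ((d.J : ℝ) - 1) := by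
    unfold TwoStageDesign.sigB TwoStageDesign.Ybar
    rw [sum_sub_sq Finset.univ (fun j => d.Ybarj j z a) ((∑ j, d.Ybarj j z a) / (d.J : ℝ)),
      Finset.card_univ, Fintype.card_fin]
  rw [hoffd, hsplit, hsigB]
  field_simp
  ring
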